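/- Let ε > 0 and let h : [0,∞) → ℝ be the ε-periodic function with h(t) = ε − t on [0,ε). Define the operator L acting on bounded measurable ε-periodic functions g by (Lg)(t) = ∫₀^t (ḡ − g(s)) ds where ḡ = (1/ε)∫₀^ε g. Then for every natural number i, the restriction of L^i h to [0,ε) is a polynomial in t of degree at most i+1 whose coefficients are of the form C_{i,j} ε^{i−j+1} (j = 0,…,i+1), with C_{i,j} rational constants independent of ε; in particular, the mean (1/ε)∫₀^ε (L^i h)(t) dt equals α_i ε^{i+1} for rational constants α_i independent of ε, with α₀ = 1/2. -/

import Mathlib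

open MeasureTheory Set

/-- The operator `L` acting on a function `g`:
`(L g)(t) = ∫₀ᵗ (ḡ − g(s)) ds` where `ḡ = (1/ε) ∫₀^ε g`. -/
noncomputable def Lop (ε : ℝ) (g : ℝ → ℝ) : ℝ → ℝ :=
  fun t => ∫ s in (0:ℝ)..t, ((1/ε) * (∫ u in (0:ℝ)..ε, g u) - g s)

namespace Stmt12

/-- The coefficients `C i j`. -/
def Cc : ℕ → ℕ → ℚ
  | 0, 0 => 1
  | 0, 1 => -1
  | 0, _+2 => 0
  | _+1, 0 => 0
  | i+1, 1 => (∑ j ∈ Finset.range (i+2), Cc i j / (j+1)) - Cc i 0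
  | i+1, j+2 => -Cc i (j+1) / (j+2)

/-- The means `α i`. -/
def al (i : ℕ) : ℚ := ∑ j ∈ Finset.range (i+2), Cc i j / (j+1)

lemma contP (n : ℕ) (a : ℕ → ℝ) :
    Continuous (fun t : ℝ => ∑ j ∈ Finset.range n, a j * t^j) :=
  continuous_finset_sum _ fun j _ => continuous_const.mul (continuous_pow j)

lemma integ_poly (n : ℕ) (a : ℕ → ℝ) (b : ℝ) :
    ∫ t in (0:ℝ)..b, ∑ j ∈ Finset.range n, a j * t^j
      = ∑ j ∈ Finset.range n, a j * b^(j+1) / ((j:ℝ)+1) := by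
  rw [intervalIntegral.integral_finset_sum]
  · refine Finset.sum_congr rfl fun j _ => ?_
    rw [intervalIntegral.integral_const_mul, integral_pow]
    rw [zero_pow (Nat.succ_ne_zero j)]
    ring
  · intro j _
    exact (continuous_const.mul (continuous_pow j)).intervalIntegrable _ _

lemma mean_formula {ε : ℝ} (hε : 0 < ε) (f : ℝ → ℝ) (i : ℕ)
    (hf : ∀ t ∈ Ico (0:ℝ) ε,
      f t = ∑ j ∈ Finset.range (i+2), (Cc i j : ℝ) * ε^(i+1-j) * t^j) :
    (1/ε) * (∫ t in (0:ℝ)..ε, f t) = (al i : ℝ) * ε^(i+1) := by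
  have hae : ∀ᵐ (x : ℝ), x ≠ ε := by
    refine ae_iff.mpr ?_
    simp
  have hcong : ∫ t in (0:ℝ)..ε, f t
      = ∫ t in (0:ℝ)..ε, ∑ j ∈ Finset.range (i+2), (Cc i j : ℝ) * ε^(i+1-j) * t^j := by
    refine intervalIntegral.integral_congr_ae ?_
    filter_upwards [hae] with x hx hxI
    rw [Set.uIoc_of_le hε.le] at hxI
    exact hf x ⟨hxI.1.le, lt_of_le_of_ne hxI.2 hx⟩
  rw [hcong, integ_poly]
  have hsum : ∀ j ∈ Finset.range (i+2),
      ((Cc i j : ℝ) * ε^(i+1-j)) * ε^(j+1) / ((j:ℝ)+1)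
        = ((Cc i j : ℝ) / ((j:ℝ)+1)) * (ε * ε^(i+1)) := by
    intro j hj
    have hle : j ≤ i + 1 := by
      simpa using Nat.lt_succ_iff.mp (Finset.mem_range.mp hj)
    have hpow : ε^(i+1-j) * ε^(j+1) = ε * ε^(i+1) := by
      rw [← pow_add]
      rw [show i+1-j + (j+1) = (i+1)+1 by omega]
      rw [pow_succ]
      ring
    rw [mul_assoc, hpow]
    ring
  rw [Finset.sum_congr rfl hsum, ← Finset.sum_mul, al]
  have hne : ε ≠ 0 := hε.ne'
  push_cast
  field_simp

end Stmt12

open Stmt12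

theorem stmt_12 :
    ∃ (C : ℕ → ℕ → ℚ) (α : ℕ → ℚ), α 0 = 1/2 ∧
      ∀ ε : ℝ, 0 < ε → ∀ h : ℝ → ℝ,
        (∀ t : ℝ, 0 ≤ t → h (t + ε) = h t) →
        (∀ t ∈ Ico (0:ℝ) ε, h t = ε - t) →
        ∀ i : ℕ,
          (∀ t ∈ Ico (0:ℝ) ε,
            (Lop ε)^[i] h t
              = ∑ j ∈ Finset.range (i+2), (C i j : ℝ) * ε^(i+1-j) * t^j) ∧
          (1/ε) * (∫ t in (0:ℝ)..ε, (Lop ε)^[i] h t) = (α i : ℝ) * ε^(i+1) := by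
  refine ⟨Cc, al, ?_, ?_⟩
  · norm_num [al, Cc, Finset.sum_range_succ]
  intro ε hε h hper hval i
  induction i with
  | zero =>
    have hpt : ∀ t ∈ Ico (0:ℝ) ε,
        (Lop ε)^[0] h t = ∑ j ∈ Finset.range 2, (Cc 0 j : ℝ) * ε^(0+1-j) * t^j := by
      intro t ht
      rw [Function.iterate_zero_apply, hval t ht]
      simp [Cc, Finset.sum_range_succ]
      ring
    exact ⟨hpt, mean_formula hε _ 0 hpt⟩
  | succ i ih =>
    obtain ⟨hpt, hmean⟩ := ih
    have hpt' : ∀ t ∈ Ico (0:ℝ) ε,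
        (Lop ε)^[i+1] h t
          = ∑ j ∈ Finset.range (i+1+2), (Cc (i+1) j : ℝ) * ε^(i+1+1-j) * t^j := by
      intro t ht
      obtain ⟨ht0, htε⟩ := ht
      rw [Function.iterate_succ_apply']
      show (∫ s in (0:ℝ)..t,
          ((1/ε) * (∫ u in (0:ℝ)..ε, (Lop ε)^[i] h u) - (Lop ε)^[i] h s)) = _
      rw [hmean]
      rw [intervalIntegral.integral_congr
        (g := fun s => (al i : ℝ) * ε^(i+1)
          - ∑ j ∈ Finset.range (i+2), (Cc i j : ℝ) * ε^(i+1-j) * s^j) ?_]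
      · rw [intervalIntegral.integral_sub (intervalIntegrable_const)
          ((contP (i+2) (fun j => (Cc i j : ℝ) * ε^(i+1-j))).intervalIntegrable _ _)]
        rw [intervalIntegral.integral_const, integ_poly]
        rw [smul_eq_mul, sub_zero]
        -- reindex sums
        rw [Finset.sum_range_succ' (fun j => (Cc (i+1) j : ℝ) * ε^(i+1+1-j) * t^j) (i+2)]
        rw [Finset.sum_range_succ' (fun j => (Cc (i+1) (j+1) : ℝ) * ε^(i+1+1-(j+1)) * t^(j+1)) (i+1)]
        rw [Finset.sum_range_succ' (fun j => (Cc i j : ℝ) * ε^(i+1-j) * t^(j+1) / ((j:ℝ)+1)) (i+1)]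
        have hC0 : (Cc (i+1) 0 : ℝ) = 0 := by norm_num [Cc]
        have hC1 : (Cc (i+1) 1 : ℝ) = (al i : ℝ) - (Cc i 0 : ℝ) := by
          have : Cc (i+1) 1 = al i - Cc i 0 := rfl
          rw [this]; push_cast; ring
        have hsum : ∑ k ∈ Finset.range (i+1),
            (Cc (i+1) (k+1+1) : ℝ) * ε^(i+1+1-(k+1+1)) * t^(k+1+1)
            = -∑ k ∈ Finset.range (i+1),
              (Cc i (k+1) : ℝ) * ε^(i+1-(k+1)) * t^(k+1+1) / ((k+1:ℝ)+1) := by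
          rw [← Finset.sum_neg_distrib]
          refine Finset.sum_congr rfl fun k _ => ?_
          have hd : Cc (i+1) (k+2) = -Cc i (k+1) / ((k:ℚ)+2) := rfl
          have he : i+1+1-(k+1+1) = i+1-(k+1) := by omega
          rw [show k+1+1 = k+2 from rfl, hd, he]
          push_cast
          ring
        rw [hsum, hC0, hC1]
        simp only [Nat.add_sub_cancel, Nat.sub_zero, pow_zero, pow_one]
        push_cast
        ring
      · intro s hs
        rw [Set.uIcc_of_le ht0] at hs
        exact congrArg _ (hpt s ⟨hs.1, lt_of_le_of_lt hs.2 htε⟩)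
    exact ⟨hpt', mean_formula hε _ (i+1) hpt'⟩
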